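/- The multi-label debias-then-normalize counterexample: let the group assignment be g = (0, 1, 0) on three examples and three classes, and define Y = [[1/2, 1/2, 0], [1, 0, 0], [0, 0, 1]], Ŷ = [[1, 1/2, 0], [1/2, 1/4, 1/2], [0, 0, 1]], and Ỹ = [[2/3, 1/3, 0], [2/5, 1/5, 2/5], [0, 0, 1]]. Then: (a) Ỹ is the row-normalization of Ŷ (each row of Ỹ equals the corresponding row of Ŷ divided by its sum); (b) DP̂(Y) = 3/4, so Y is biased; (c) for every class k, the two group means of the k-th column of Ŷ are equal, so DP̂(Ŷ) = 0; and (d) DP̂(Ỹ) = 1/10 > 0, so normalizing the independently debiased scores reintroduces bias. -/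

import Mathlib

open Finset

/-- The empirical mean of `v` over the examples `i` with group `g i = s`. -/
noncomputable def groupMean {N R : ℕ} (g : Fin N → Fin R) (s : Fin R) (v : Fin N → ℝ) : ℝ :=
  (∑ i ∈ univ.filter (fun i => g i = s), v i) /
    ((univ.filter (fun i => g i = s)).card : ℝ)

/-- Empirical multiclass demographic parity of the score matrix `Y`. -/
noncomputable def empDP {N L R : ℕ} [NeZero L] [NeZero R] (g : Fin N → Fin R)
    (Y : Fin N → Fin L → ℝ) : ℝ :=
  univ.sup' univ_nonempty (fun k : Fin L =>
    univ.sup' univ_nonempty (fun s : Fin R => groupMean g s (fun i => Y i k)) -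
    univ.inf' univ_nonempty (fun s : Fin R => groupMean g s (fun i => Y i k)))

lemma sup2 (f : Fin 2 → ℝ) : univ.sup' univ_nonempty f = max (f 0) (f 1) := by
  refine le_antisymm (Finset.sup'_le _ _ fun i _ => ?_)
    (max_le (Finset.le_sup' f (mem_univ 0)) (Finset.le_sup' f (mem_univ 1)))
  fin_cases i <;> simp [le_max_left, le_max_right]

lemma inf2 (f : Fin 2 → ℝ) : univ.inf' univ_nonempty f = min (f 0) (f 1) := by
  refine le_antisymm (le_min (Finset.inf'_le f (mem_univ 0)) (Finset.inf'_le f (mem_univ 1)))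
    (Finset.le_inf' _ _ fun i _ => ?_)
  fin_cases i <;> simp [min_le_left, min_le_right]

lemma sup3 (f : Fin 3 → ℝ) : univ.sup' univ_nonempty f = max (f 0) (max (f 1) (f 2)) := by
  refine le_antisymm (Finset.sup'_le _ _ fun i _ => ?_) ?_
  · fin_cases i
    · exact le_max_left _ _
    · exact le_trans (le_max_left _ _) (le_max_right _ _)
    · exact le_trans (le_max_right _ _) (le_max_right _ _)
  · exact max_le (Finset.le_sup' f (mem_univ 0))
      (max_le (Finset.le_sup' f (mem_univ 1)) (Finset.le_sup' f (mem_univ 2)))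

lemma gm0 (v : Fin 3 → ℝ) : groupMean (![0, 1, 0] : Fin 3 → Fin 2) 0 v = (v 0 + v 2) / 2 := by
  simp [groupMean,
    show (univ.filter (fun i => (![0,1,0] : Fin 3 → Fin 2) i = 0)) = {0, 2} from by decide]

lemma gm1 (v : Fin 3 → ℝ) : groupMean (![0, 1, 0] : Fin 3 → Fin 2) 1 v = v 1 := by
  simp [groupMean,
    show (univ.filter (fun i => (![0,1,0] : Fin 3 → Fin 2) i = 1)) = {1} from by decide]

/-- The multi-label debias-then-normalize counterexample: with groups `g = (0,1,0)`,
`Ỹ` is the row-normalization of `Ŷ`; the original labels `Y` have `DP̂(Y) = 3/4`; the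
independently debiased scores `Ŷ` have equal group means in every class (so `DP̂(Ŷ) = 0`);
yet after normalization `DP̂(Ỹ) = 1/10 > 0`. -/
theorem multilabel_normalization_counterexample
    (g : Fin 3 → Fin 2) (hgdef : g = ![0, 1, 0])
    (Y Yhat Ytilde : Fin 3 → Fin 3 → ℝ)
    (hY : Y = ![![1/2, 1/2, 0], ![1, 0, 0], ![0, 0, 1]])
    (hYhat : Yhat = ![![1, 1/2, 0], ![1/2, 1/4, 1/2], ![0, 0, 1]])
    (hYtilde : Ytilde = ![![2/3, 1/3, 0], ![2/5, 1/5, 2/5], ![0, 0, 1]]) :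
    (∀ i k, Ytilde i k = Yhat i k / (∑ j, Yhat i j)) ∧
    empDP g Y = 3 / 4 ∧
    ((∀ k : Fin 3,
        groupMean g 0 (fun i => Yhat i k) = groupMean g 1 (fun i => Yhat i k)) ∧
      empDP g Yhat = 0) ∧
    (empDP g Ytilde = 1 / 10 ∧ 0 < empDP g Ytilde) := by
  subst hgdef hY hYhat hYtilde
  refine ⟨?_, ?_, ⟨?_, ?_⟩, ?_, ?_⟩
  · intro i k
    fin_cases i <;> fin_cases k <;> norm_num [Fin.sum_univ_three, Matrix.cons_val_two, Matrix.tail_cons, Matrix.head_cons, Matrix.cons_val_one, Matrix.cons_val_zero]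
  · simp only [empDP, sup3, sup2, inf2, gm0, gm1, Matrix.cons_val_zero,
      Matrix.cons_val_one, Matrix.head_cons, Matrix.cons_val_two, Matrix.tail_cons]
    norm_num [max_def, min_def]
  · intro k
    fin_cases k <;> rw [gm0, gm1] <;> norm_num [Matrix.cons_val_two, Matrix.tail_cons, Matrix.head_cons, Matrix.cons_val_one, Matrix.cons_val_zero]
  · simp only [empDP, sup3, sup2, inf2, gm0, gm1, Matrix.cons_val_zero,
      Matrix.cons_val_one, Matrix.head_cons, Matrix.cons_val_two, Matrix.tail_cons]
    norm_num [max_def, min_def]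
  · simp only [empDP, sup3, sup2, inf2, gm0, gm1, Matrix.cons_val_zero,
      Matrix.cons_val_one, Matrix.head_cons, Matrix.cons_val_two, Matrix.tail_cons]
    norm_num [max_def, min_def]
  · simp only [empDP, sup3, sup2, inf2, gm0, gm1, Matrix.cons_val_zero,
      Matrix.cons_val_one, Matrix.head_cons, Matrix.cons_val_two, Matrix.tail_cons]
    norm_num [max_def, min_def]
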